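/- Let X be a real random variable with pdf f_X that is unimodal with mode at 0, i.e., f_X is non-decreasing on (−∞, 0] and non-increasing on [0, ∞), and let F_X denote its cumulative distribution function. Fix t > 0 and an integer M ≥ 2, and suppose a ∈ ℝ is a transition point for the pair (f_X(·), f_X(·+t)), i.e., max{f_X(x), f_X(x+t)} = f_X(x+t) for all x < a and max{f_X(x), f_X(x+t)} = f_X(x) for all x > a. Then ∫_{−∞}^{∞} max_{k∈[0:M−1]} f_X(x + kt) dx = 1 + (M−1)(F_X(a + t) − F_X(a)). -/
import Mathlib


open MeasureTheory ProbabilityTheory ENNReal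

noncomputable section

namespace UnimodalAux

open Set

lemma shift_integrable (f : ℝ → ℝ) (hf : Integrable f) (c : ℝ) :
    Integrable (fun x => f (x + c)) :=
  ((measurePreserving_add_right volume c).integrable_comp_emb
    (MeasurableEquiv.addRight c).measurableEmbedding).2 hf

lemma shift_setIntegral (f : ℝ → ℝ) (b c : ℝ) :
    ∫ x in Iio b, f (x + c) = ∫ u in Iio (b + c), f u := by
  rw [← integral_indicator measurableSet_Iio, ← integral_indicator measurableSet_Iio]
  rw [← integral_add_right_eq_self (fun u => (Iio (b + c)).indicator f u) c]
  congr 1; ext x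
  simp only [indicator, mem_Iio]
  by_cases h : x < b <;> simp [h, add_lt_add_iff_right, not_lt.mpr]

lemma isup_succ (M : ℕ) (hM : 1 ≤ M) (g : ℕ → ℝ) :
    (⨆ k : Fin (M + 1), g k) = max (⨆ k : Fin M, g k) (g M) := by
  haveI : Nonempty (Fin M) := Fin.pos_iff_nonempty.mp hM
  apply le_antisymm
  · apply ciSup_le
    intro k
    induction k using Fin.lastCases with
    | last => simp [le_max_right]
    | cast i =>
        refine le_max_of_le_left ?_
        refine le_ciSup_of_le (Set.Finite.bddAbove (Set.finite_range _)) i ?_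
        simp
  · refine max_le ?_ ?_
    · apply ciSup_le
      intro i
      refine le_ciSup_of_le (Set.Finite.bddAbove (Set.finite_range _)) ⟨i, by omega⟩ ?_
      simp
    · refine le_ciSup_of_le (Set.Finite.bddAbove (Set.finite_range _)) ⟨M, by omega⟩ ?_
      simp

lemma key (f : ℝ → ℝ) (hf_nonneg : ∀ x, 0 ≤ f x) (hf_int : Integrable f)
    (t : ℝ) (ht : 0 < t) (a : ℝ)
    (ha_left : ∀ x < a, f x ≤ f (x + t))
    (ha_right : ∀ x > a, f (x + t) ≤ f x) :
    ∀ M : ℕ, 1 ≤ M →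
      Integrable (fun x => ⨆ k : Fin M, f (x + (k : ℕ) * t)) ∧
      ∫ x, (⨆ k : Fin M, f (x + (k : ℕ) * t)) =
        (∫ x, f x) + ((M : ℝ) - 1) *
          ((∫ u in Iio (a + t), f u) - ∫ u in Iio a, f u) := by
  intro M
  induction M with
  | zero => omega
  | succ M ih =>
    intro _
    rcases Nat.eq_zero_or_pos M with hM0 | hM1
    · -- base case M + 1 = 1
      subst hM0
      have hs : (fun x => ⨆ k : Fin 1, f (x + (k : ℕ) * t)) = f := by
        funext x
        rw [ciSup_unique]
        norm_num
      rw [hs]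
      refine ⟨hf_int, ?_⟩
      norm_num
    · -- inductive step
      obtain ⟨hIntM, hEqM⟩ := ih hM1
      -- split the sup
      have hsplit : ∀ x : ℝ, (⨆ k : Fin (M + 1), f (x + (k : ℕ) * t)) =
          max (⨆ k : Fin M, f (x + (k : ℕ) * t)) (f (x + (M : ℝ) * t)) := by
        intro x
        exact isup_succ M hM1 (fun n => f (x + (n : ℝ) * t))
      have hIntM1 : Integrable (fun x => ⨆ k : Fin (M + 1), f (x + (k : ℕ) * t)) := by
        have h1 : Integrable (fun x => f (x + (M : ℝ) * t)) :=
          shift_integrable f hf_int _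
        have h2 := hIntM.sup h1
        refine h2.congr (Filter.Eventually.of_forall fun x => ?_)
        exact (hsplit x).symm
      refine ⟨hIntM1, ?_⟩
      set c : ℝ := a - ((M : ℝ) - 1) * t with hc
      -- chain lemma on the left of a
      have hstep : ∀ (x : ℝ) (k : ℕ), x + (k : ℝ) * t < a →
          f (x + (k : ℝ) * t) ≤ f (x + ((k : ℕ) + 1 : ℕ) * t) := by
        intro x k hk
        have := ha_left _ hk
        have he : x + (k : ℝ) * t + t = x + ((k : ℕ) + 1 : ℕ) * t := by
          push_cast; ring
        rwa [he] at this
      have hle : ∀ (x : ℝ) (k : ℕ), x + (k : ℝ) * t < a →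
          ∀ j, j ≤ k → f (x + (j : ℝ) * t) ≤ f (x + (k : ℝ) * t) := by
        intro x k
        induction k with
        | zero =>
          intro _ j hj
          interval_cases j
          exact le_refl _
        | succ n ihn =>
          intro hk j hj
          have hn : x + (n : ℝ) * t < a := by
            have : x + (n : ℝ) * t < x + ((n : ℝ) + 1) * t := by nlinarith
            calc x + (n : ℝ) * t < x + ((n : ℝ) + 1) * t := this
              _ = x + ((n + 1 : ℕ) : ℝ) * t := by push_cast; ring
              _ < a := hk
          rcases Nat.lt_succ_iff_lt_or_eq.mp (Nat.lt_succ_of_le hj) with h | h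
          · calc f (x + (j : ℝ) * t) ≤ f (x + (n : ℝ) * t) :=
                ihn hn j (Nat.lt_succ_iff.mp h)
              _ ≤ f (x + ((n + 1 : ℕ) : ℝ) * t) := hstep x n hn
          · subst h; exact le_refl _
      -- a.e. identity for the difference
      have hMcast : ((M - 1 : ℕ) : ℝ) = (M : ℝ) - 1 := by
        push_cast [hM1]
        ring
      have hdiff : ∀ x : ℝ, x ≠ c →
          (⨆ k : Fin (M + 1), f (x + (k : ℕ) * t)) - (⨆ k : Fin M, f (x + (k : ℕ) * t)) =
          (Iio c).indicator
            (fun x => f (x + (M : ℝ) * t) - f (x + ((M : ℝ) - 1) * t)) x := by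
        intro x hx
        rcases lt_or_gt_of_ne hx with hlt | hgt
        · -- x < c : increasing chain, sup over M terms is the last one
          have hm1 : x + ((M : ℝ) - 1) * t < a := by simp [hc] at hlt ⊢; linarith
          have hm1' : x + ((M - 1 : ℕ) : ℝ) * t < a := by rwa [hMcast]
          have hSx : (⨆ k : Fin M, f (x + (k : ℕ) * t)) = f (x + ((M : ℝ) - 1) * t) := by
            haveI : Nonempty (Fin M) := Fin.pos_iff_nonempty.mp hM1
            apply le_antisymm
            · apply ciSup_le
              intro k
              have := hle x (M - 1) hm1' k (by omega)
              rwa [hMcast] at this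
            · refine le_ciSup_of_le (Set.Finite.bddAbove (Set.finite_range _))
                ⟨M - 1, by omega⟩ ?_
              simp [hMcast]
          have hlast : f (x + ((M : ℝ) - 1) * t) ≤ f (x + (M : ℝ) * t) := by
            have := hstep x (M - 1) hm1'
            rw [hMcast] at this
            have he : (((M - 1) + 1 : ℕ) : ℝ) = (M : ℝ) := by
              push_cast [Nat.sub_add_cancel hM1]; ring
            rwa [he] at this
          rw [hsplit x, hSx, indicator_of_mem (mem_Iio.mpr hlt)]
          rw [max_eq_right hlast]
        · -- x > c : the new term is dominated
          have hm1 : x + ((M : ℝ) - 1) * t > a := by simp [hc] at hgt ⊢; linarith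
          have hdom : f (x + (M : ℝ) * t) ≤ f (x + ((M : ℝ) - 1) * t) := by
            have := ha_right _ hm1
            have he : x + ((M : ℝ) - 1) * t + t = x + (M : ℝ) * t := by ring
            rwa [he] at this
          have hterm : f (x + ((M : ℝ) - 1) * t) ≤ (⨆ k : Fin M, f (x + (k : ℕ) * t)) := by
            haveI : Nonempty (Fin M) := Fin.pos_iff_nonempty.mp hM1
            refine le_ciSup_of_le (Set.Finite.bddAbove (Set.finite_range _))
              ⟨M - 1, by omega⟩ ?_
            simp [hMcast]
          rw [hsplit x, indicator_of_notMem (by simp [mem_Iio]; linarith)]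
          rw [max_eq_left (le_trans hdom hterm)]
          ring
      have hae : (fun x => (⨆ k : Fin (M + 1), f (x + (k : ℕ) * t)) - (⨆ k : Fin M, f (x + (k : ℕ) * t))) =ᵐ[volume]
          (Iio c).indicator
            (fun x => f (x + (M : ℝ) * t) - f (x + ((M : ℝ) - 1) * t)) := by
        have h1 : ∀ᵐ (x : ℝ), x ≠ c := by
          rw [ae_iff]
          have : {x : ℝ | ¬ x ≠ c} = {c} := by ext x; simp
          rw [this]
          exact measure_singleton c
        filter_upwards [h1] with x hx
        exact hdiff x hx
      -- integral of the difference
      have hint1 : Integrable (fun x => f (x + (M : ℝ) * t)) := shift_integrable f hf_int _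
      have hint2 : Integrable (fun x => f (x + ((M : ℝ) - 1) * t)) :=
        shift_integrable f hf_int _
      have hDint : ∫ x, ((⨆ k : Fin (M + 1), f (x + (k : ℕ) * t)) - (⨆ k : Fin M, f (x + (k : ℕ) * t))) =
          (∫ u in Iio (a + t), f u) - ∫ u in Iio a, f u := by
        rw [integral_congr_ae hae, integral_indicator measurableSet_Iio]
        rw [integral_sub (hint1.restrict) (hint2.restrict)]
        rw [shift_setIntegral, shift_setIntegral]
        have e1 : c + (M : ℝ) * t = a + t := by rw [hc]; ring
        have e2 : c + ((M : ℝ) - 1) * t = a := by rw [hc]; ring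
        rw [e1, e2]
      have hsub : ∫ x, ((⨆ k : Fin (M + 1), f (x + (k : ℕ) * t)) - (⨆ k : Fin M, f (x + (k : ℕ) * t))) =
          (∫ x, (⨆ k : Fin (M + 1), f (x + (k : ℕ) * t))) - ∫ x, (⨆ k : Fin M, f (x + (k : ℕ) * t)) :=
        integral_sub hIntM1 hIntM
      have : (∫ x, (⨆ k : Fin (M + 1), f (x + (k : ℕ) * t))) =
          (∫ x, (⨆ k : Fin M, f (x + (k : ℕ) * t))) + ((∫ u in Iio (a + t), f u) - ∫ u in Iio a, f u) := by
        rw [← hDint, hsub]; ring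
      rw [this, hEqM]
      push_cast
      ring

end UnimodalAux

/-- **Integral of the running maximum of shifted copies of a unimodal density
(Lemma 1).** Let `f` be a pdf on `ℝ` that is unimodal with mode at `0`, and let `a` be a
transition point for the pair `(f(·), f(·+t))`.  Then
`∫ max_{k∈[0:M−1]} f(x + kt) dx = 1 + (M−1)(F(a+t) − F(a))`, where
`F(x) = ∫_{(-∞,x]} f` is the cdf. -/
theorem unimodal_max_shift_integral
    (f : ℝ → ℝ) (hf_meas : Measurable f) (hf_nonneg : ∀ x, 0 ≤ f x)
    (hf_int : ∫ x, f x = 1)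
    (hf_mono : MonotoneOn f (Set.Iic 0)) (hf_anti : AntitoneOn f (Set.Ici 0))
    (t : ℝ) (ht : 0 < t) (M : ℕ) (hM : 2 ≤ M) (a : ℝ)
    (ha_left : ∀ x < a, max (f x) (f (x + t)) = f (x + t))
    (ha_right : ∀ x > a, max (f x) (f (x + t)) = f x) :
    ∫ x, (⨆ k : Fin M, f (x + (k : ℝ) * t)) =
      1 + ((M : ℝ) - 1) *
        ((∫ u in Set.Iic (a + t), f u) - ∫ u in Set.Iic a, f u) := by
  have hInt : Integrable f := by
    by_contra h
    rw [integral_undef h] at hf_int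
    norm_num at hf_int
  have hl : ∀ x < a, f x ≤ f (x + t) := fun x hx => by
    have := ha_left x hx; exact max_eq_right_iff.mp this
  have hr : ∀ x > a, f (x + t) ≤ f x := fun x hx => by
    have := ha_right x hx; exact max_eq_left_iff.mp this
  obtain ⟨-, hkey⟩ := UnimodalAux.key f hf_nonneg hInt t ht a hl hr M (by omega)
  have hIic1 : ∫ u in Set.Iio (a + t), f u = ∫ u in Set.Iic (a + t), f u :=
    setIntegral_congr_set Iio_ae_eq_Iic
  have hIic2 : ∫ u in Set.Iio a, f u = ∫ u in Set.Iic a, f u :=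
    setIntegral_congr_set Iio_ae_eq_Iic
  rw [hkey, hf_int, hIic1, hIic2]
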